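/- Let n ≥ 1 be an integer and μ > 0. Then |μ−1| ≤ n − d_*(n+μ) if and only if μ ≤ μ_*(n) := (n²+n+2)/(n+2). (This corresponds to the massless case μ2 = 0, μ1 = μ of the scale-invariant problem, where δ = (μ−1)² and √δ = |μ−1|.) -/
import Mathlib


/-- `d_*(ν)`: zero for `ν ≤ 1`, and `(−1−ν+√(ν²+10ν−7))/2` for `ν > 1`. -/
noncomputable def dStar (ν : ℝ) : ℝ :=
  if 1 < ν then (-1 - ν + Real.sqrt (ν ^ 2 + 10 * ν - 7)) / 2 else 0

/-- In the massless case (`√δ = |μ−1|`): `|μ−1| ≤ n − d_*(n+μ)` iff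
`μ ≤ μ_*(n) = (n²+n+2)/(n+2)`. -/
theorem massless_threshold (n : ℕ) (hn : 1 ≤ n) (μ : ℝ) (hμ : 0 < μ) :
    |μ - 1| ≤ (n : ℝ) - dStar ((n : ℝ) + μ) ↔
      μ ≤ ((n : ℝ) ^ 2 + n + 2) / ((n : ℝ) + 2) := by
  have hn1 : (1 : ℝ) ≤ (n : ℝ) := by exact_mod_cast hn
  have hν : (1 : ℝ) < (n : ℝ) + μ := by linarith
  have hn2 : (0 : ℝ) < (n : ℝ) + 2 := by linarith
  rw [dStar, if_pos hν]
  set s := Real.sqrt (((n : ℝ) + μ) ^ 2 + 10 * ((n : ℝ) + μ) - 7) with hs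
  have hs0 : 0 ≤ s := Real.sqrt_nonneg _
  by_cases h1 : μ ≤ 1
  · constructor
    · intro _
      rw [le_div_iff₀ hn2]
      nlinarith
    · intro _
      rw [abs_of_nonpos (by linarith)]
      have hkey : s ≤ 3 * (n : ℝ) - 1 + 3 * μ := by
        rw [hs, Real.sqrt_le_iff]
        constructor
        · linarith
        · nlinarith [sq_nonneg ((n : ℝ) + μ - 1)]
      linarith
  · push_neg at h1
    rw [abs_of_pos (by linarith)]
    constructor
    · intro h
      have hsq : s ^ 2 = ((n : ℝ) + μ) ^ 2 + 10 * ((n : ℝ) + μ) - 7 := by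
        rw [hs]; exact Real.sq_sqrt (by nlinarith)
      have hsle : s ≤ 3 * (n : ℝ) + 3 - μ := by linarith
      rw [le_div_iff₀ hn2]
      nlinarith
    · intro h
      rw [le_div_iff₀ hn2] at h
      have hkey : s ≤ 3 * (n : ℝ) + 3 - μ := by
        rw [hs, Real.sqrt_le_iff]
        constructor
        · nlinarith
        · nlinarith
      linarith
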